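/- The constants H_{|f|,m}^δ are continuous at δ = 0 along dyadic grids: lim_{n→∞} H_{|f|,m}^{2^{-n}} = H_{|f|,m}^0. -/

import Mathlib

open MeasureTheory ENNReal Filter Set Topology

/-- The set `ℚ_*` of dyadic rationals. -/
def dyadicSet : Set ℝ := {x | ∃ k : ℤ, ∃ n : ℕ, x = (k : ℝ) / 2 ^ n}

/-- The grid `δ ℤ^d` for `δ > 0`, with the convention that for `δ = 0` it is `ℚ_*^d`. -/
noncomputable def dyadicGrid (d : ℕ) (δ : ℝ) : Set (Fin d → ℝ) :=
  if δ = 0 then {t | ∀ i, t i ∈ dyadicSet} else {t | ∀ i, ∃ k : ℤ, t i = δ * k}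

/-- The cube `[0,T]^d`. -/
noncomputable def pickandsCube (d : ℕ) (T : ℝ) : Set (Fin d → ℝ) :=
  Set.Icc 0 (fun _ => T)

/-- `∫_E sup_{t ∈ S} |f_t(z)| m(dz)`. -/
noncomputable def isupFun {E : Type*} [MeasurableSpace E] (m : Measure E) {d : ℕ}
    (f : (Fin d → ℝ) → E → ℝ) (S : Set (Fin d → ℝ)) : ℝ≥0∞ :=
  ∫⁻ z, ⨆ t ∈ S, ENNReal.ofReal |f t z| ∂m


lemma int_mem_dyadicSet (k : ℤ) : (k : ℝ) ∈ dyadicSet := ⟨k, 0, by simp⟩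

lemma dyadicSet_add {a b : ℝ} (ha : a ∈ dyadicSet) (hb : b ∈ dyadicSet) :
    a + b ∈ dyadicSet := by
  obtain ⟨k, n, rfl⟩ := ha
  obtain ⟨j, p, rfl⟩ := hb
  refine ⟨k * 2 ^ p + j * 2 ^ n, n + p, ?_⟩
  have h1 : ((2:ℝ)) ^ n ≠ 0 := by positivity
  have h2 : ((2:ℝ)) ^ p ≠ 0 := by positivity
  push_cast
  rw [pow_add]
  field_simp
  try ring

lemma dyadicGrid_zero_def (d : ℕ) : dyadicGrid d 0 = {t | ∀ i, t i ∈ dyadicSet} :=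
  if_pos rfl

lemma two_pow_inv_ne_zero (n : ℕ) : ((2:ℝ) ^ n)⁻¹ ≠ 0 := by positivity

lemma dyadicGrid_inv_def (d n : ℕ) :
    dyadicGrid d ((2:ℝ) ^ n)⁻¹ = {t | ∀ i, ∃ k : ℤ, t i = ((2:ℝ) ^ n)⁻¹ * k} :=
  if_neg (two_pow_inv_ne_zero n)

lemma dyadicGrid_inv_subset_zero (d n : ℕ) :
    dyadicGrid d ((2:ℝ) ^ n)⁻¹ ⊆ dyadicGrid d 0 := by
  rw [dyadicGrid_inv_def, dyadicGrid_zero_def]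
  rintro t ht i
  obtain ⟨k, hk⟩ := ht i
  exact ⟨k, n, by rw [hk, div_eq_inv_mul]⟩

lemma dyadicGrid_inv_mono (d : ℕ) {n n' : ℕ} (h : n ≤ n') :
    dyadicGrid d ((2:ℝ) ^ n)⁻¹ ⊆ dyadicGrid d ((2:ℝ) ^ n')⁻¹ := by
  rw [dyadicGrid_inv_def, dyadicGrid_inv_def]
  rintro t ht i
  obtain ⟨k, hk⟩ := ht i
  refine ⟨k * 2 ^ (n' - n), ?_⟩
  have : (2:ℝ) ^ n' = 2 ^ n * 2 ^ (n' - n) := by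
    rw [← pow_add, Nat.add_sub_cancel' h]
  rw [hk, this]
  push_cast
  have h1 : ((2:ℝ)) ^ n ≠ 0 := by positivity
  have h2 : ((2:ℝ)) ^ (n' - n) ≠ 0 := by positivity
  field_simp
  try ring

lemma dyadicGrid_zero_subset_iUnion (d : ℕ) :
    dyadicGrid d 0 ⊆ ⋃ n : ℕ, dyadicGrid d ((2:ℝ) ^ n)⁻¹ := by
  rw [dyadicGrid_zero_def]
  intro t ht
  choose k p hkp using ht
  classical
  set N := Finset.univ.sup p with hN
  refine mem_iUnion.2 ⟨N, ?_⟩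
  rw [dyadicGrid_inv_def]
  intro i
  refine ⟨k i * 2 ^ (N - p i), ?_⟩
  have hp : p i ≤ N := Finset.le_sup (Finset.mem_univ i)
  have : (2:ℝ) ^ N = 2 ^ (p i) * 2 ^ (N - p i) := by
    rw [← pow_add, Nat.add_sub_cancel' hp]
  rw [hkp i, this]
  push_cast
  have h1 : ((2:ℝ)) ^ (p i) ≠ 0 := by positivity
  have h2 : ((2:ℝ)) ^ (N - p i) ≠ 0 := by positivity
  field_simp
  try ring

/-- shifting by an integer vector preserves grids. -/
lemma dyadicGrid_add_int (d : ℕ) {δ : ℝ} (hδ : δ = 0 ∨ ∃ n : ℕ, δ = ((2:ℝ) ^ n)⁻¹)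
    {t : Fin d → ℝ} (ht : t ∈ dyadicGrid d δ) (v : Fin d → ℤ) :
    (fun i => t i + (v i : ℝ)) ∈ dyadicGrid d δ := by
  rcases hδ with rfl | ⟨n, rfl⟩
  · rw [dyadicGrid_zero_def] at ht ⊢
    exact fun i => dyadicSet_add (ht i) (int_mem_dyadicSet (v i))
  · rw [dyadicGrid_inv_def] at ht ⊢
    intro i
    obtain ⟨k, hk⟩ := ht i
    refine ⟨k + v i * 2 ^ n, ?_⟩
    have h1 : ((2:ℝ)) ^ n ≠ 0 := by positivity
    show t i + (v i : ℝ) = _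
    rw [hk]
    push_cast
    field_simp
    try ring

lemma dyadicSet_countable : dyadicSet.Countable := by
  have : dyadicSet ⊆ Set.range (fun p : ℤ × ℕ => (p.1 : ℝ) / 2 ^ p.2) := by
    rintro x ⟨k, n, rfl⟩; exact ⟨(k, n), rfl⟩
  exact (Set.countable_range _).mono this

lemma dyadicGrid_countable (d : ℕ) (δ : ℝ) : (dyadicGrid d δ).Countable := by
  classical
  unfold dyadicGrid
  split_ifs
  · have : {t : Fin d → ℝ | ∀ i, t i ∈ dyadicSet} ⊆
        Set.range (fun p : Fin d → ℤ × ℕ => fun i => ((p i).1 : ℝ) / 2 ^ (p i).2) := by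
      intro t ht
      choose k n hkn using ht
      exact ⟨fun i => (k i, n i), by funext i; exact (hkn i).symm⟩
    exact (Set.countable_range _).mono this
  · have : {t : Fin d → ℝ | ∀ i, ∃ k : ℤ, t i = δ * k} ⊆
        Set.range (fun v : Fin d → ℤ => fun i => δ * (v i : ℝ)) := by
      intro t ht
      choose k hk using ht
      exact ⟨k, by funext i; exact (hk i).symm⟩
    exact (Set.countable_range _).mono this

lemma mem_pickandsCube {d : ℕ} {T : ℝ} {t : Fin d → ℝ} :
    t ∈ pickandsCube d T ↔ ∀ i, 0 ≤ t i ∧ t i ≤ T := by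
  simp only [pickandsCube, Set.mem_Icc, Pi.le_def]
  constructor
  · rintro ⟨h1, h2⟩ i; exact ⟨h1 i, h2 i⟩
  · intro h; exact ⟨fun i => (h i).1, fun i => (h i).2⟩

lemma unit_grid_finite (d n : ℕ) :
    (pickandsCube d 1 ∩ dyadicGrid d ((2:ℝ) ^ n)⁻¹).Finite := by
  have : (pickandsCube d 1 ∩ dyadicGrid d ((2:ℝ) ^ n)⁻¹) ⊆
      {t : Fin d → ℝ | ∀ i, t i ∈ (fun k : ℤ => ((2:ℝ) ^ n)⁻¹ * k) '' (Set.Icc 0 (2 ^ n))} := by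
    rintro t ⟨hc, hg⟩ i
    rw [dyadicGrid_inv_def] at hg
    obtain ⟨k, hk⟩ := hg i
    have h0 : (0:ℝ) < ((2:ℝ) ^ n)⁻¹ := by positivity
    have hti := (mem_pickandsCube.1 hc) i
    refine ⟨k, ⟨?_, ?_⟩, hk.symm⟩
    · have : (0:ℝ) ≤ (k : ℝ) := by
        nlinarith [hti.1, hk, h0]
      exact_mod_cast this
    · have h2 : ((2:ℝ)^n)⁻¹ * k ≤ 1 := hk ▸ hti.2
      have hp : (0:ℝ) < 2 ^ n := by positivity
      have h3 : (k:ℝ) ≤ 2 ^ n * 1 := (inv_mul_le_iff₀ hp).1 h2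
      have : (k:ℝ) ≤ ((2 ^ n : ℤ) : ℝ) := by push_cast; linarith
      exact_mod_cast this
  exact (Set.Finite.pi' (fun i => (Set.finite_Icc (0:ℤ) (2^n)).image _)).subset this

/-- the constants `H_{|f|,m}^δ` are continuous at `δ = 0` along dyadic
grids: `lim_{n→∞} H_{|f|,m}^{2^{-n}} = H_{|f|,m}^0`. -/
theorem stable_pickands_constant_continuity
    {E : Type*} [MeasurableSpace E] (m : Measure E) [SigmaFinite m]
    (d : ℕ) (hd : 0 < d) (f : (Fin d → ℝ) → E → ℝ)
    (hmeas : ∀ t, Measurable (f t))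
    (hint : ∀ t, (∫⁻ z, ENNReal.ofReal |f t z| ∂m) < ⊤)
    (hnorm2 : ∀ K : Set (Fin d → ℝ), IsCompact K →
      isupFun m f (K ∩ dyadicGrid d 0) < ⊤)
    (hgenA : ∀ K : Set (Fin d → ℝ), IsCompact K → ∀ c : Fin d → ℝ,
      (∀ i, c i ∈ dyadicSet) →
      isupFun m (fun t z => f (t + c) z) (K ∩ dyadicGrid d 0) =
        isupFun m f (K ∩ dyadicGrid d 0)) :
    ∀ H : ℝ → ℝ≥0∞,
      (∀ δ : ℝ, (δ = 0 ∨ ∃ n : ℕ, δ = ((2 : ℝ) ^ n)⁻¹) →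
        Tendsto (fun T : ℝ =>
            isupFun m f (pickandsCube d T ∩ dyadicGrid d δ) / ENNReal.ofReal (T ^ d))
          atTop (𝓝 (H δ))) →
      Tendsto (fun n : ℕ => H (((2 : ℝ) ^ n)⁻¹)) atTop (𝓝 (H 0)) := by
  intro H hH
  classical
  set gr : ℕ → Set (Fin d → ℝ) := fun n => dyadicGrid d ((2:ℝ) ^ n)⁻¹ with hgr
  have hgr0c : (dyadicGrid d 0).Countable := dyadicGrid_countable d 0
  have hgrc : ∀ n, (gr n).Countable := fun n => dyadicGrid_countable d _
  have measf : ∀ (c : Fin d → ℝ) (S : Set (Fin d → ℝ)), S.Countable →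
      Measurable fun z => ⨆ t ∈ S, ENNReal.ofReal |f (t + c) z| := fun c S hS =>
    Measurable.biSup S hS (fun t _ => ((hmeas (t + c)).abs).ennreal_ofReal)
  have measf0 : ∀ (S : Set (Fin d → ℝ)), S.Countable →
      Measurable fun z => ⨆ t ∈ S, ENNReal.ofReal |f t z| := fun S hS =>
    Measurable.biSup S hS (fun t _ => ((hmeas t).abs).ennreal_ofReal)
  have isup_mono : ∀ {S S' : Set (Fin d → ℝ)}, S ⊆ S' → isupFun m f S ≤ isupFun m f S' :=
    fun {S S'} h => lintegral_mono fun z => biSup_mono (fun t ht => h ht)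
  set F : ℕ → ℝ → ℝ≥0∞ := fun n T => isupFun m f (pickandsCube d T ∩ gr n) with hF
  set F0 : ℝ → ℝ≥0∞ := fun T => isupFun m f (pickandsCube d T ∩ dyadicGrid d 0) with hF0
  have hFle : ∀ (n : ℕ) (T : ℝ), F n T ≤ F0 T := fun n T =>
    isup_mono (inter_subset_inter_right _ (dyadicGrid_inv_subset_zero d n))
  have hH0 : Tendsto (fun T : ℝ => F0 T / ENNReal.ofReal (T ^ d)) atTop (𝓝 (H 0)) :=
    hH 0 (Or.inl rfl)
  have hHn : ∀ n : ℕ, Tendsto (fun T : ℝ => F n T / ENNReal.ofReal (T ^ d)) atTop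
      (𝓝 (H ((2:ℝ) ^ n)⁻¹)) := fun n => hH _ (Or.inr ⟨n, rfl⟩)
  have hHle : ∀ n : ℕ, H ((2:ℝ) ^ n)⁻¹ ≤ H 0 := by
    intro n
    refine le_of_tendsto_of_tendsto' (hHn n) hH0 fun T => ?_
    exact ENNReal.div_le_div_right (hFle n T) _
  -- monotone convergence at T = 1
  have hF0_1_lt : F0 1 < ⊤ := hnorm2 _ isCompact_Icc
  have hSmono : Monotone (fun n => pickandsCube d 1 ∩ gr n) := fun p q hpq =>
    inter_subset_inter_right _ (dyadicGrid_inv_mono d hpq)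
  have hSunion : (⋃ n, pickandsCube d 1 ∩ gr n) = pickandsCube d 1 ∩ dyadicGrid d 0 := by
    rw [← inter_iUnion]
    apply Set.Subset.antisymm
    · exact inter_subset_inter_right _ (iUnion_subset fun n => dyadicGrid_inv_subset_zero d n)
    · exact inter_subset_inter_right _ (dyadicGrid_zero_subset_iUnion d)
  set g : ℕ → E → ℝ≥0∞ :=
    fun n z => ⨆ t ∈ pickandsCube d 1 ∩ gr n, ENNReal.ofReal |f t z| with hg
  have hgmeas : ∀ n, Measurable (g n) := fun n => measf0 _ ((hgrc n).mono inter_subset_right)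
  have hgmono : Monotone g := fun p q hpq z => biSup_mono (fun t ht => hSmono hpq ht)
  have hmonoF1 : Monotone (fun n => F n 1) := fun p q hpq => isup_mono (hSmono hpq)
  have hMCTeq : F0 1 = ⨆ n, F n 1 := by
    have h1 : F0 1 = ∫⁻ z, ⨆ n, g n z ∂m := by
      rw [hF0]
      refine lintegral_congr fun z => ?_
      rw [← hSunion, iSup_iUnion]
    rw [h1, lintegral_iSup hgmeas hgmono]
    rfl
  have hMCT : Tendsto (fun n => F n 1) atTop (𝓝 (F0 1)) := by
    rw [hMCTeq]; exact tendsto_atTop_iSup hmonoF1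
  set e : ℕ → ℝ≥0∞ := fun n => F0 1 - F n 1 with he
  have heT : Tendsto e atTop (𝓝 0) := by
    have := ENNReal.Tendsto.sub (tendsto_const_nhds (x := F0 1) (f := atTop))
      hMCT (Or.inl hF0_1_lt.ne)
    simpa using this
  -- main subadditivity-type estimate
  have key : ∀ (n k : ℕ), 1 ≤ k → F0 (k:ℝ) ≤ F n (k:ℝ) + (k:ℝ≥0∞) ^ d * e n := by
    intro n k hk
    set cvec : (Fin d → Fin k) → Fin d → ℝ := fun c i => ((c i : ℕ) : ℝ) with hcvec
    set a : (Fin d → Fin k) → E → ℝ≥0∞ := fun c z =>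
      ⨆ t ∈ pickandsCube d 1 ∩ dyadicGrid d 0, ENNReal.ofReal |f (t + cvec c) z| with ha
    set b : (Fin d → Fin k) → E → ℝ≥0∞ := fun c z =>
      ⨆ t ∈ pickandsCube d 1 ∩ gr n, ENNReal.ofReal |f (t + cvec c) z| with hb
    have hcd : ∀ c i, cvec c i ∈ dyadicSet := fun c i => ⟨((c i : ℕ) : ℤ), 0, by push_cast; simp; rfl⟩
    have hinta : ∀ c, ∫⁻ z, a c z ∂m = F0 1 := fun c =>
      hgenA (pickandsCube d 1) isCompact_Icc (cvec c) (hcd c)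
    have hSn_eq : (pickandsCube d 1 ∩ gr n) ∩ dyadicGrid d 0 = pickandsCube d 1 ∩ gr n :=
      inter_eq_left.mpr (inter_subset_right.trans (dyadicGrid_inv_subset_zero d n))
    have hintb : ∀ c, ∫⁻ z, b c z ∂m = F n 1 := by
      intro c
      have h2 := hgenA _ (unit_grid_finite d n).isCompact (cvec c) (hcd c)
      rw [hSn_eq] at h2
      exact h2
    have hFn1_ne : F n 1 ≠ ⊤ := ((hFle n 1).trans_lt hF0_1_lt).ne
    have hba : ∀ c z, b c z ≤ a c z := fun c z =>
      biSup_mono fun t ht =>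
        inter_subset_inter_right _ (dyadicGrid_inv_subset_zero d n) ht
    have hpt : ∀ z, (⨆ t ∈ pickandsCube d (k:ℝ) ∩ dyadicGrid d 0, ENNReal.ofReal |f t z|)
        ≤ (⨆ t ∈ pickandsCube d (k:ℝ) ∩ gr n, ENNReal.ofReal |f t z|)
          + ∑ c : Fin d → Fin k, (a c z - b c z) := by
      intro z
      refine iSup₂_le fun t ht => ?_
      obtain ⟨htc, htg⟩ := ht
      have htc' := mem_pickandsCube.1 htc
      have hex : ∀ i, ∃ ci : Fin k, (ci : ℝ) ≤ t i ∧ t i ≤ (ci : ℝ) + 1 := by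
        intro i
        obtain ⟨h0i, h1i⟩ := htc' i
        have hfl0 : (0:ℤ) ≤ ⌊t i⌋ := Int.floor_nonneg.2 h0i
        refine ⟨⟨min ⌊t i⌋.toNat (k - 1), by omega⟩, ?_, ?_⟩
        · have h3 : ((⌊t i⌋.toNat : ℕ) : ℝ) = (⌊t i⌋ : ℝ) := by
            rw [← Int.cast_natCast, Int.toNat_of_nonneg hfl0]
          have h4 : ((min ⌊t i⌋.toNat (k - 1) : ℕ) : ℝ) ≤ ((⌊t i⌋.toNat : ℕ) : ℝ) := by
            exact_mod_cast Nat.cast_le.2 (min_le_left _ _)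
          have h5 := Int.floor_le (t i)
          simp only [Fin.val_mk] at *
          linarith [h3 ▸ h4]
        · by_cases hcase : ⌊t i⌋.toNat ≤ k - 1
          · have hNe : min ⌊t i⌋.toNat (k - 1) = ⌊t i⌋.toNat := min_eq_left hcase
            have h3 : ((⌊t i⌋.toNat : ℕ) : ℝ) = (⌊t i⌋ : ℝ) := by
              rw [← Int.cast_natCast, Int.toNat_of_nonneg hfl0]
            have h2 := Int.lt_floor_add_one (t i)
            simp only [Fin.val_mk, hNe, h3]
            linarith
          · have hNe : min ⌊t i⌋.toNat (k - 1) = k - 1 := min_eq_right (by omega)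
            have h6 : ((k - 1 : ℕ) : ℝ) = (k : ℝ) - 1 := by
              have : (1:ℕ) ≤ k := hk
              push_cast [Nat.cast_sub this]
              ring
            simp only [Fin.val_mk, hNe, h6]
            linarith
      choose cc hcc1 hcc2 using hex
      set s : Fin d → ℝ := fun i => t i + ((-((cc i : ℕ) : ℤ) : ℤ) : ℝ) with hs
      have hsgrid : s ∈ dyadicGrid d 0 := by
        have := dyadicGrid_add_int d (Or.inl rfl) htg (fun i => -((cc i : ℕ) : ℤ))
        exact this
      have hscube : s ∈ pickandsCube d 1 := by
        rw [mem_pickandsCube]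
        intro i
        have h1 := hcc1 i
        have h2 := hcc2 i
        simp only [hs]
        push_cast
        constructor <;> linarith
      have hts : t = s + cvec cc := by
        funext i
        simp only [hs, Pi.add_apply, hcvec]
        push_cast
        ring
      have step1 : ENNReal.ofReal |f t z| ≤ a cc z := by
        have : ENNReal.ofReal |f t z| = ENNReal.ofReal |f (s + cvec cc) z| := by rw [← hts]
        rw [this, ha]
        exact le_biSup (fun t => ENNReal.ofReal |f (t + cvec cc) z|)
          (Set.mem_inter hscube hsgrid)
      have hbG : b cc z ≤ ⨆ t ∈ pickandsCube d (k:ℝ) ∩ gr n, ENNReal.ofReal |f t z| := by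
        refine iSup₂_le fun s' hs' => ?_
        have hmem : s' + cvec cc ∈ pickandsCube d (k:ℝ) ∩ gr n := by
          constructor
          · rw [mem_pickandsCube]
            intro i
            have h1 := (mem_pickandsCube.1 hs'.1) i
            have h2 : ((cc i : ℕ) : ℝ) ≤ (k : ℝ) - 1 := by
              have hlt : (cc i : ℕ) ≤ k - 1 := by
                have := (cc i).isLt; omega
              have h6 : ((k - 1 : ℕ) : ℝ) = (k : ℝ) - 1 := by
                have : (1:ℕ) ≤ k := hk
                push_cast [Nat.cast_sub this]
                ring
              calc ((cc i : ℕ) : ℝ) ≤ ((k - 1 : ℕ) : ℝ) := by exact_mod_cast hlt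
                _ = (k : ℝ) - 1 := h6
            have h3 : (0:ℝ) ≤ ((cc i : ℕ) : ℝ) := by positivity
            simp only [Pi.add_apply, hcvec]
            constructor <;> linarith [h1.1, h1.2]
          · have := dyadicGrid_add_int d (Or.inr ⟨n, rfl⟩) hs'.2 (fun i => ((cc i : ℕ) : ℤ))
            have heq : (fun i => s' i + (((cc i : ℕ) : ℤ) : ℝ)) = s' + cvec cc := by
              funext i
              simp only [Pi.add_apply, hcvec]
              push_cast
              ring
            rw [heq] at this
            exact this
        exact le_biSup (fun t => ENNReal.ofReal |f t z|) hmem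
      calc ENNReal.ofReal |f t z| ≤ a cc z := step1
        _ ≤ (a cc z - b cc z) + b cc z := le_tsub_add
        _ ≤ (∑ c : Fin d → Fin k, (a c z - b c z))
            + ⨆ t ∈ pickandsCube d (k:ℝ) ∩ gr n, ENNReal.ofReal |f t z| :=
          add_le_add (Finset.single_le_sum (f := fun c => a c z - b c z)
            (fun c _ => zero_le) (Finset.mem_univ cc)) hbG
        _ = (⨆ t ∈ pickandsCube d (k:ℝ) ∩ gr n, ENNReal.ofReal |f t z|)
            + ∑ c : Fin d → Fin k, (a c z - b c z) := add_comm _ _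
    have hmeasGn : Measurable fun z =>
        ⨆ t ∈ pickandsCube d (k:ℝ) ∩ gr n, ENNReal.ofReal |f t z| :=
      measf0 _ ((hgrc n).mono inter_subset_right)
    have hmeasa : ∀ c, Measurable (a c) := fun c =>
      measf (cvec c) _ (hgr0c.mono inter_subset_right)
    have hmeasb : ∀ c, Measurable (b c) := fun c =>
      measf (cvec c) _ ((hgrc n).mono inter_subset_right)
    have hintab : ∀ c, ∫⁻ z, (a c z - b c z) ∂m = e n := by
      intro c
      rw [lintegral_sub (hmeasb c) (by rw [hintb c]; exact hFn1_ne)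
        (ae_of_all _ (hba c)), hinta c, hintb c]
    calc F0 (k:ℝ) ≤ ∫⁻ z, ((⨆ t ∈ pickandsCube d (k:ℝ) ∩ gr n, ENNReal.ofReal |f t z|)
          + ∑ c : Fin d → Fin k, (a c z - b c z)) ∂m := lintegral_mono hpt
      _ = F n (k:ℝ) + ∑ c : Fin d → Fin k, ∫⁻ z, (a c z - b c z) ∂m := by
          rw [lintegral_add_left hmeasGn,
            lintegral_finset_sum (f := fun c z => a c z - b c z) _ (fun c _ => (hmeasa c).sub (hmeasb c))]
          rfl
      _ = F n (k:ℝ) + (k:ℝ≥0∞) ^ d * e n := by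
          simp only [hintab]
          rw [Finset.sum_const, Finset.card_univ, Fintype.card_fun, Fintype.card_fin,
            Fintype.card_fin, nsmul_eq_mul]
          push_cast
          ring
  -- limits along ℕ
  have hH0' : Tendsto (fun k : ℕ => F0 (k:ℝ) / ENNReal.ofReal ((k:ℝ) ^ d)) atTop (𝓝 (H 0)) :=
    hH0.comp tendsto_natCast_atTop_atTop
  have hHn' : ∀ n, Tendsto (fun k : ℕ => F n (k:ℝ) / ENNReal.ofReal ((k:ℝ) ^ d)) atTop
      (𝓝 (H ((2:ℝ) ^ n)⁻¹)) := fun n => (hHn n).comp tendsto_natCast_atTop_atTop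
  have hkey2 : ∀ n, H 0 ≤ H ((2:ℝ) ^ n)⁻¹ + e n := by
    intro n
    have hub : Tendsto (fun k : ℕ => F n (k:ℝ) / ENNReal.ofReal ((k:ℝ) ^ d) + e n) atTop
        (𝓝 (H ((2:ℝ) ^ n)⁻¹ + e n)) := (hHn' n).add tendsto_const_nhds
    refine le_of_tendsto_of_tendsto hH0' hub ?_
    filter_upwards [eventually_ge_atTop 1] with k hk
    have hk0 : (k:ℝ≥0∞) ≠ 0 := Nat.cast_ne_zero.2 (by omega)
    have hD : ENNReal.ofReal ((k:ℝ) ^ d) = (k:ℝ≥0∞) ^ d := by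
      rw [ENNReal.ofReal_pow (by positivity), ENNReal.ofReal_natCast]
    have hD0 : ((k:ℝ≥0∞)) ^ d ≠ 0 := pow_ne_zero _ hk0
    have hDt : ((k:ℝ≥0∞)) ^ d ≠ ⊤ := by
      exact ENNReal.pow_ne_top (ENNReal.natCast_ne_top k)
    calc F0 (k:ℝ) / ENNReal.ofReal ((k:ℝ) ^ d)
        ≤ (F n (k:ℝ) + (k:ℝ≥0∞) ^ d * e n) / ENNReal.ofReal ((k:ℝ) ^ d) :=
          ENNReal.div_le_div_right (key n k hk) _
      _ = F n (k:ℝ) / ENNReal.ofReal ((k:ℝ) ^ d) + e n := by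
          rw [← ENNReal.div_add_div_same]
          congr 1
          rw [hD, mul_comm, div_eq_mul_inv, mul_assoc,
            ENNReal.mul_inv_cancel hD0 hDt, mul_one]
  have hlow : ∀ n : ℕ, H 0 - e n ≤ H ((2:ℝ) ^ n)⁻¹ := fun n => tsub_le_iff_right.2 (hkey2 n)
  have hlowT : Tendsto (fun n : ℕ => H 0 - e n) atTop (𝓝 (H 0)) := by
    have := ENNReal.Tendsto.sub (tendsto_const_nhds (x := H 0) (f := atTop)) heT
      (Or.inr (by simp))
    simpa using this
  exact tendsto_of_tendsto_of_tendsto_of_le_of_le hlowT tendsto_const_nhds hlow hHle
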